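/- arXiv:hep-th/0203179 — 2 statements merged into one kernel-verified Lean document; each statement's English description precedes it below -/
import Mathlib

section
/- In ((ℤ/4ℤ)²)^{11}, among the vectors v with 2v ≠ 0 (i.e. v does not lie in the subgroup of elements killed by 2): the number with Q(v) = 0 is 2^{42} + 2^{31} − 2^{21}; the number with Q(v) = 1 is 2^{42} − 2^{31}; the number with Q(v) = 2 is 2^{42} + 2^{31} − 2^{21}; and the number with Q(v) = 3 is 2^{42} − 2^{31}. -/
/-- The quadratic form of `g` orthogonal hyperbolic planes over `ℤ/N`:
`Q(v) = ∑ᵢ aᵢ bᵢ` for `v = ((a₁,b₁),…,(a_g,b_g))`. -/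
def hypQ {N g : ℕ} (v : Fin g → ZMod N × ZMod N) : ZMod N :=
  ∑ i, (v i).1 * (v i).2

noncomputable def Fcnt (g : ℕ) (c : ZMod 4) : ℕ :=
  Nat.card {v : Fin g → ZMod 4 × ZMod 4 // hypQ v = c}

lemma hypQ_cons {g : ℕ} (p : ZMod 4 × ZMod 4) (w : Fin g → ZMod 4 × ZMod 4) :
    hypQ (Fin.cons p w) = p.1 * p.2 + hypQ w := by
  simp [hypQ, Fin.sum_univ_succ]

lemma Fcnt_succ (g : ℕ) (c : ZMod 4) :
    Fcnt (g+1) c = ∑ p : ZMod 4 × ZMod 4, Fcnt g (c - p.1 * p.2) := by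
  have e : {v : Fin (g+1) → ZMod 4 × ZMod 4 // hypQ v = c} ≃
      Σ p : ZMod 4 × ZMod 4, {w : Fin g → ZMod 4 × ZMod 4 // hypQ w = c - p.1 * p.2} := by
    refine ⟨fun v => ⟨v.1 0, Fin.tail v.1, ?_⟩, fun x => ⟨Fin.cons x.1 x.2.1, ?_⟩, ?_, ?_⟩
    · have := v.2
      rw [← Fin.cons_self_tail v.1, hypQ_cons] at this
      linear_combination this
    · rw [hypQ_cons, x.2.2]; ring
    · intro v; ext : 1; exact Fin.cons_self_tail v.1
    · intro ⟨p, w, h⟩; simp [Fin.tail_cons]; rfl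
  simp only [Fcnt, Nat.card_eq_fintype_card]
  rw [Fintype.card_congr e, Fintype.card_sigma]


lemma sum_prod (f : ZMod 4 → ℕ) :
    ∑ p : ZMod 4 × ZMod 4, f (p.1 * p.2) = 8 * f 0 + 2 * f 1 + 4 * f 2 + 2 * f 3 := by
  have h4 : ∀ (h : ZMod 4 → ℕ), ∑ x, h x = h 0 + h 1 + h 2 + h 3 := fun h => Fin.sum_univ_four h
  rw [Fintype.sum_prod_type, h4]
  simp only [h4]
  norm_num [show ((2:ZMod 4)*2) = 0 by decide, show ((2:ZMod 4)*3) = 2 by decide,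
    show ((3:ZMod 4)*2) = 2 by decide, show ((3:ZMod 4)*3) = 1 by decide,
    show ((3:ZMod 4)*2) = 2 by decide]
  have e4 : ((4:ZMod 4)) = 0 := by decide
  have e6 : ((6:ZMod 4)) = 2 := by decide
  have e9 : ((9:ZMod 4)) = 1 := by decide
  rw [e4, e6, e9]
  ring

lemma Fcnt_zero (c : ZMod 4) : Fcnt 0 c = if c = 0 then 1 else 0 := by
  have h0 : ∀ v : Fin 0 → ZMod 4 × ZMod 4, hypQ v = 0 := by intro v; simp [hypQ]
  rcases eq_or_ne c 0 with rfl | hc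
  · rw [Fcnt, Nat.card_eq_fintype_card, if_pos rfl]
    rw [Fintype.card_eq_one_iff]
    exact ⟨⟨finZeroElim, h0 _⟩, fun y => Subtype.ext (funext fun i => i.elim0)⟩
  · rw [Fcnt, Nat.card_eq_fintype_card, if_neg hc, Fintype.card_eq_zero_iff]
    exact ⟨fun v => hc (v.2 ▸ (h0 v.1).symm ▸ (h0 v.1))⟩

lemma Fcnt_closed : ∀ g : ℕ,
    Fcnt (g+1) 0 = 4*16^g + 2*8^g + 2*4^g ∧
    Fcnt (g+1) 1 + 2*8^g = 4*16^g ∧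
    Fcnt (g+1) 2 + 2*4^g = 4*16^g + 2*8^g ∧
    Fcnt (g+1) 3 + 2*8^g = 4*16^g := by
  intro g
  induction g with
  | zero =>
      have h : ∀ c : ZMod 4, Fcnt 1 c = ∑ p : ZMod 4 × ZMod 4, Fcnt 0 (c - p.1 * p.2) :=
        fun c => Fcnt_succ 0 c
      refine ⟨?_, ?_, ?_, ?_⟩ <;>
        · rw [h, sum_prod (fun d => Fcnt 0 (_ - d))]
          simp only [Fcnt_zero]
          decide
  | succ g ih =>
      obtain ⟨h0, h1, h2, h3⟩ := ih
      have e1 : ((0:ZMod 4) - 1) = 3 := by decide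
      have e2 : ((0:ZMod 4) - 2) = 2 := by decide
      have e3 : ((0:ZMod 4) - 3) = 1 := by decide
      have f1 : ((1:ZMod 4) - 1) = 0 := by decide
      have f2 : ((1:ZMod 4) - 2) = 3 := by decide
      have f3 : ((1:ZMod 4) - 3) = 2 := by decide
      have g1 : ((2:ZMod 4) - 1) = 1 := by decide
      have g2 : ((2:ZMod 4) - 2) = 0 := by decide
      have g3 : ((2:ZMod 4) - 3) = 3 := by decide
      have k1 : ((3:ZMod 4) - 1) = 2 := by decide
      have k2 : ((3:ZMod 4) - 2) = 1 := by decide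
      have k3 : ((3:ZMod 4) - 3) = 0 := by decide
      refine ⟨?_, ?_, ?_, ?_⟩ <;>
        rw [Fcnt_succ, sum_prod (fun d => Fcnt (g+1) (_ - d))] <;>
        simp only [sub_zero, e1, e2, e3, f1, f2, f3, g1, g2, g3, k1, k2, k3,
          pow_succ] <;>
        omega

lemma two_smul_hypQ (v : Fin 11 → ZMod 4 × ZMod 4) (h : 2 • v = 0) : hypQ v = 0 := by
  have key : ∀ a b : ZMod 4, a + a = 0 → b + b = 0 → a * b = 0 := by decide
  have h' : ∀ i, 2 • v i = 0 := fun i => congrFun h i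
  rw [hypQ]
  refine Finset.sum_eq_zero fun i _ => ?_
  have h1 : 2 • (v i).1 = 0 := congrArg Prod.fst (h' i)
  have h2 : 2 • (v i).2 = 0 := congrArg Prod.snd (h' i)
  rw [two_smul] at h1 h2
  exact key _ _ h1 h2

lemma card_two_torsion :
    Nat.card {v : Fin 11 → ZMod 4 × ZMod 4 // 2 • v = 0} = 2 ^ 22 := by
  have e1 : {v : Fin 11 → ZMod 4 × ZMod 4 // 2 • v = 0} ≃
      {v : Fin 11 → ZMod 4 × ZMod 4 // ∀ i, 2 • v i = 0} :=
    Equiv.subtypeEquivRight (fun v => by simp [funext_iff])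
  have e2 := Equiv.subtypePiEquivPi (p := fun (_ : Fin 11) (p : ZMod 4 × ZMod 4) => 2 • p = 0)
  rw [Nat.card_congr (e1.trans e2), Nat.card_eq_fintype_card, Fintype.card_pi]
  have h4 : Fintype.card {p : ZMod 4 × ZMod 4 // 2 • p = 0} = 4 := by decide
  simp only [h4, Finset.prod_const, Finset.card_univ, Fintype.card_fin]
  norm_num

lemma card_ne_cases (c : ZMod 4) (hc : c ≠ 0) :
    Nat.card {v : Fin 11 → ZMod 4 × ZMod 4 // 2 • v ≠ 0 ∧ hypQ v = c} = Fcnt 11 c := by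
  refine Nat.card_congr (Equiv.subtypeEquivRight fun v => ?_)
  constructor
  · exact And.right
  · intro h
    refine ⟨fun h2 => hc ?_, h⟩
    rw [← h, two_smul_hypQ v h2]


lemma card_zero_case :
    Nat.card {v : Fin 11 → ZMod 4 × ZMod 4 // 2 • v ≠ 0 ∧ hypQ v = 0} + 2 ^ 22 = Fcnt 11 0 := by
  classical
  have key := Nat.card_congr
    (Equiv.sumCompl (fun t : {v : Fin 11 → ZMod 4 × ZMod 4 // hypQ v = 0} => 2 • t.1 = 0))
  rw [Nat.card_sum] at key
  have e1 : {t : {v : Fin 11 → ZMod 4 × ZMod 4 // hypQ v = 0} // 2 • t.1 = 0} ≃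
      {v : Fin 11 → ZMod 4 × ZMod 4 // 2 • v = 0} :=
    ⟨fun t => ⟨t.1.1, t.2⟩, fun v => ⟨⟨v.1, two_smul_hypQ v.1 v.2⟩, v.2⟩,
      fun t => rfl, fun v => rfl⟩
  have e2 : {t : {v : Fin 11 → ZMod 4 × ZMod 4 // hypQ v = 0} // ¬ 2 • t.1 = 0} ≃
      {v : Fin 11 → ZMod 4 × ZMod 4 // 2 • v ≠ 0 ∧ hypQ v = 0} :=
    ⟨fun t => ⟨t.1.1, t.2, t.1.2⟩, fun v => ⟨⟨v.1, v.2.2⟩, v.2.1⟩,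
      fun t => rfl, fun v => rfl⟩
  rw [Nat.card_congr e1, Nat.card_congr e2, card_two_torsion] at key
  rw [Nat.add_comm] at key
  rw [key, Fcnt]

/-- In `((ℤ/4)²)^{11}`, among the vectors `v` of exact order 4 (i.e. `2v ≠ 0`):
the number with `Q(v) = 0` is `2^42 + 2^31 − 2^21`, with `Q(v) = 1` is
`2^42 − 2^31`, with `Q(v) = 2` is `2^42 + 2^31 − 2^21`, and with `Q(v) = 3`
is `2^42 − 2^31`. -/
theorem su4_block_count :
    Nat.card {v : Fin 11 → ZMod 4 × ZMod 4 // 2 • v ≠ 0 ∧ hypQ v = 0}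
      = 2 ^ 42 + 2 ^ 31 - 2 ^ 21 ∧
    Nat.card {v : Fin 11 → ZMod 4 × ZMod 4 // 2 • v ≠ 0 ∧ hypQ v = 1}
      = 2 ^ 42 - 2 ^ 31 ∧
    Nat.card {v : Fin 11 → ZMod 4 × ZMod 4 // 2 • v ≠ 0 ∧ hypQ v = 2}
      = 2 ^ 42 + 2 ^ 31 - 2 ^ 21 ∧
    Nat.card {v : Fin 11 → ZMod 4 × ZMod 4 // 2 • v ≠ 0 ∧ hypQ v = 3}
      = 2 ^ 42 - 2 ^ 31 := by
  obtain ⟨h0, h1, h2, h3⟩ := Fcnt_closed 10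
  norm_num at h1 h2 h3
  have z0 := card_zero_case
  rw [h0] at z0
  refine ⟨by generalize Nat.card {v : Fin 11 → ZMod 4 × ZMod 4 // 2 • v ≠ 0 ∧ hypQ v = 0} = a at *; omega, ?_, ?_, ?_⟩
  · rw [card_ne_cases 1 (by decide)]; generalize Fcnt 11 1 = a at *; omega
  · rw [card_ne_cases 2 (by decide)]; generalize Fcnt 11 2 = a at *; omega
  · rw [card_ne_cases 3 (by decide)]; generalize Fcnt 11 3 = a at *; omega
end

section
/- (Hecke-transform closed form, N prime.) For every prime N and every τ in the complex upper half-plane ℍ: n_0·Z_0(τ) + ∑_{j=1}^{N−1} n_j·Z_j(τ) + Z_t(τ) = (1/N²)·( N^{23}·G_0(τ) + N^{12}·∑_{b=1}^{N−1} G_b(τ) + H_0(τ) ), i.e. the sum over all 't Hooft fluxes equals (1/N²)·∑_{a,d ≥ 1, ad = N, 0 ≤ b < d} d^{12}·gcd(b,d)^{11}·η((aτ+b)/d)^{−24} (with gcd(0,d) = d), where n_0 = N^{21} + (N−1)N^{10} − 1 and n_j = N^{21} − N^{10} for 1 ≤ j ≤ N−1. -/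
/-- The Dedekind eta function on the upper half-plane,
`η(τ) = exp(πiτ/12) · ∏_{n=1}^∞ (1 − exp(2πinτ))`. -/
noncomputable def dedekindEta (τ : ℂ) : ℂ :=
  Complex.exp (Real.pi * Complex.I * τ / 12) *
    ∏' n : ℕ, (1 - Complex.exp (2 * Real.pi * Complex.I * (n + 1) * τ))

/-- `G_j(τ) = η((τ+j)/N)^{−24}`. -/
noncomputable def suG (N j : ℕ) (τ : ℂ) : ℂ :=
  (dedekindEta ((τ + (j : ℂ)) / (N : ℂ)) ^ 24)⁻¹

/-- `H₀(τ) = η(Nτ)^{−24}`. -/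
noncomputable def suH (N : ℕ) (τ : ℂ) : ℂ :=
  (dedekindEta ((N : ℂ) * τ) ^ 24)⁻¹

/-- `Z_j(τ) = (1/N)·∑_{k=0}^{N−1} e^{−2πijk/N} G_k(τ)`, the Vafa–Witten
partition function of `SU(N)/ℤ_N` on K3 with ’t Hooft flux of type `j`. -/
noncomputable def suZ (N j : ℕ) (τ : ℂ) : ℂ :=
  (1 / (N : ℂ)) * ∑ k ∈ Finset.range N,
    Complex.exp (-2 * Real.pi * Complex.I * (j : ℂ) * (k : ℂ) / (N : ℂ)) * suG N k τ

/-- `Z_t(τ) = (1/N²)·H₀(τ) + Z_0(τ)`, the `SU(N)` (trivial flux) partition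
function on K3. -/
noncomputable def suZt (N : ℕ) (τ : ℂ) : ℂ :=
  (1 / (N : ℂ) ^ 2) * suH N τ + suZ N 0 τ


private lemma exp_ne_one_of_lt (N : ℕ) (hN : N.Prime) (k : ℕ) (hk : k < N) (hk0 : k ≠ 0) :
    Complex.exp (-2 * Real.pi * Complex.I * (k : ℂ) / (N : ℂ)) ≠ 1 := by
  intro h
  rw [Complex.exp_eq_one_iff] at h
  obtain ⟨m, hm⟩ := h
  have hNC : (N : ℂ) ≠ 0 := Nat.cast_ne_zero.2 hN.pos.ne'
  have hπ : (Real.pi : ℂ) ≠ 0 := by exact_mod_cast Real.pi_ne_zero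
  have h2 : ((k : ℤ) : ℂ) = ((-m * N : ℤ) : ℂ) := by
    push_cast
    field_simp at hm
    have h2πI : (2 * (Real.pi:ℂ) * Complex.I) ≠ 0 := by
      simp [hπ, Complex.I_ne_zero]
    have h2' : (2 * (Real.pi:ℂ) * Complex.I) * (k : ℂ)
        = (2 * (Real.pi:ℂ) * Complex.I) * (-(m:ℂ) * (N:ℂ)) := by linear_combination (-(2 * (Real.pi:ℂ) * Complex.I)) * hm
    exact mul_left_cancel₀ h2πI h2'
  have h3 : (k : ℤ) = -m * N := Int.cast_injective h2
  have hdvd : (N : ℤ) ∣ (k : ℤ) := ⟨-m, by linarith [h3]⟩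
  have := Int.le_of_dvd (by exact_mod_cast Nat.pos_of_ne_zero hk0) hdvd
  omega

private lemma inner_geom (N : ℕ) (hN : N.Prime) (k : ℕ) (hk : k < N) :
    (∑ j ∈ Finset.range N,
        Complex.exp (-2 * Real.pi * Complex.I * (j : ℂ) * (k : ℂ) / (N : ℂ)))
      = if k = 0 then (N : ℂ) else 0 := by
  have hNC : (N : ℂ) ≠ 0 := Nat.cast_ne_zero.2 hN.pos.ne'
  by_cases hk0 : k = 0
  · simp [hk0]
  · simp only [hk0, if_false]
    have hrw : ∀ j : ℕ, Complex.exp (-2 * Real.pi * Complex.I * (j : ℂ) * (k : ℂ) / (N : ℂ))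
        = (Complex.exp (-2 * Real.pi * Complex.I * (k : ℂ) / (N : ℂ))) ^ j := by
      intro j
      rw [← Complex.exp_nat_mul]
      ring_nf
    simp only [hrw]
    rw [geom_sum_eq (exp_ne_one_of_lt N hN k hk hk0)]
    have hpow : (Complex.exp (-2 * Real.pi * Complex.I * (k : ℂ) / (N : ℂ))) ^ N = 1 := by
      rw [← Complex.exp_nat_mul]
      have : (N : ℂ) * (-2 * Real.pi * Complex.I * (k : ℂ) / (N : ℂ))
          = ((-(k : ℤ) : ℤ) : ℂ) * (2 * Real.pi * Complex.I) := by
        push_cast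
        field_simp
      rw [this, Complex.exp_int_mul_two_pi_mul_I]
    rw [hpow]
    simp

private lemma sumZ_eq (N : ℕ) (hN : N.Prime) (τ : ℂ) :
    ∑ j ∈ Finset.range N, suZ N j τ = suG N 0 τ := by
  have hNC : (N : ℂ) ≠ 0 := Nat.cast_ne_zero.2 hN.pos.ne'
  unfold suZ
  rw [← Finset.mul_sum, Finset.sum_comm]
  have : ∀ k ∈ Finset.range N,
      (∑ j ∈ Finset.range N,
        Complex.exp (-2 * Real.pi * Complex.I * (j : ℂ) * (k : ℂ) / (N : ℂ)) * suG N k τ)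
      = (if k = 0 then (N : ℂ) else 0) * suG N k τ := by
    intro k hk
    rw [← Finset.sum_mul, inner_geom N hN k (Finset.mem_range.1 hk)]
  rw [Finset.sum_congr rfl this]
  rw [show (∑ x ∈ Finset.range N, (if x = 0 then (N:ℂ) else 0) * suG N x τ)
      = ∑ x ∈ Finset.range N, (if x = 0 then (N:ℂ) * suG N x τ else 0) from
    Finset.sum_congr rfl (fun k _ => by split <;> simp)]
  rw [Finset.sum_ite_eq' (Finset.range N) 0 (fun k => (N:ℂ) * suG N k τ)]
  simp only [Finset.mem_range, hN.pos, if_true]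
  field_simp

private lemma Z0_eq (N : ℕ) (τ : ℂ) :
    suZ N 0 τ = (1 / (N : ℂ)) * ∑ k ∈ Finset.range N, suG N k τ := by
  unfold suZ
  simp

private lemma icc_sum (N : ℕ) (hN : N.Prime) (f : ℕ → ℂ) :
    ∑ j ∈ Finset.Icc 1 (N - 1), f j = (∑ j ∈ Finset.range N, f j) - f 0 := by
  have h2 := hN.two_le
  have : Finset.range N = insert 0 (Finset.Icc 1 (N - 1)) := by
    ext x
    simp only [Finset.mem_range, Finset.mem_insert, Finset.mem_Icc]
    omega
  rw [this, Finset.sum_insert (by simp)]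
  ring

/-- Hecke-transform closed form for prime `N`: the sum over all ’t Hooft
fluxes equals `(1/N²)( N^23 G₀(τ) + N^12 ∑_{b=1}^{N−1} G_b(τ) + H₀(τ) )`. -/
theorem suN_flux_sum_hecke (N : ℕ) (hN : N.Prime) (τ : ℂ) (hτ : 0 < τ.im) :
    ((N : ℂ) ^ 21 + ((N : ℂ) - 1) * (N : ℂ) ^ 10 - 1) * suZ N 0 τ
        + ∑ j ∈ Finset.Icc 1 (N - 1), ((N : ℂ) ^ 21 - (N : ℂ) ^ 10) * suZ N j τ
        + suZt N τ
      = (1 / (N : ℂ) ^ 2) *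
        ((N : ℂ) ^ 23 * suG N 0 τ
          + (N : ℂ) ^ 12 * ∑ b ∈ Finset.Icc 1 (N - 1), suG N b τ
          + suH N τ) := by
  have hNC : (N : ℂ) ≠ 0 := Nat.cast_ne_zero.2 hN.pos.ne'
  have hZsum := sumZ_eq N hN τ
  have hZ0 := Z0_eq N τ
  rw [suZt, icc_sum N hN (fun j => ((N : ℂ) ^ 21 - (N : ℂ) ^ 10) * suZ N j τ),
    icc_sum N hN (fun b => suG N b τ), ← Finset.mul_sum, hZsum, hZ0]
  field_simp
  ring
end
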